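/- With the recursive PWM basis {pᵢ} for D = 1/2 as above, every pᵢ with i ≥ 1 satisfies the antiperiodicity −pᵢ(τ) = pᵢ(τ + 1/2) for all τ ∈ (0, 1/2). -/

import Mathlib

noncomputable def pwm : ℕ → ℝ → ℝ
  | 0 => fun _ => 1
  | 1 => fun τ => if τ < 1/2 then Real.sqrt 3 * (4 * τ - 1) else Real.sqrt 3 * (-4 * τ + 3)
  | (i + 2) => fun τ =>
      (∫ η in (1/2:ℝ)..τ, pwm (i + 1) η)
        - ∫ τ' in (0:ℝ)..1, (∫ η in (1/2:ℝ)..τ', pwm (i + 1) η)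

lemma pwm_continuous : ∀ i, Continuous (pwm i) := by
  intro i
  induction i using Nat.twoStepInduction with
  | zero => exact continuous_const
  | one =>
    show Continuous fun τ : ℝ =>
      if τ < 1/2 then Real.sqrt 3 * (4 * τ - 1) else Real.sqrt 3 * (-4 * τ + 3)
    apply Continuous.if
    · intro a ha
      have : a ∈ frontier (Set.Iio (1/2 : ℝ)) := by
        simpa [Set.Iio] using ha
      rw [frontier_Iio] at this
      simp only [Set.mem_singleton_iff] at this
      subst this
      norm_num
    · fun_prop
    · fun_prop
  | more n ih ih2 =>
    show Continuous fun τ : ℝ =>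
      (∫ η in (1/2:ℝ)..τ, pwm (n + 1) η)
        - ∫ τ' in (0:ℝ)..1, (∫ η in (1/2:ℝ)..τ', pwm (n + 1) η)
    exact (intervalIntegral.continuous_primitive
      (fun a b => ih2.intervalIntegrable a b) (1/2)).sub continuous_const

/-- Key step: if continuous `f` is antiperiodic on `(0, 1/2)`, then its normalized
primitive is antiperiodic too. -/
lemma key_step (f : ℝ → ℝ) (hc : Continuous f)
    (h : ∀ τ ∈ Set.Ioo (0:ℝ) (1/2), -f τ = f (τ + 1/2)) :
    ∀ τ ∈ Set.Ioo (0:ℝ) (1/2),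
      -((∫ η in (1/2:ℝ)..τ, f η) - ∫ τ' in (0:ℝ)..1, (∫ η in (1/2:ℝ)..τ', f η))
        = (∫ η in (1/2:ℝ)..(τ + 1/2), f η)
            - ∫ τ' in (0:ℝ)..1, (∫ η in (1/2:ℝ)..τ', f η) := by
  have hint : ∀ a b : ℝ, IntervalIntegrable f MeasureTheory.volume a b :=
    fun a b => hc.intervalIntegrable a b
  set A : ℝ := ∫ η in (0:ℝ)..(1/2:ℝ), f η with hA
  -- Step 1 : shift identity for all τ in [0, 1/2]
  have shift : ∀ τ : ℝ, 0 ≤ τ → τ ≤ 1/2 →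
      (∫ η in (1/2:ℝ)..(τ + 1/2), f η) = -∫ η in (0:ℝ)..τ, f η := by
    intro τ hτ0 hτ1
    have h1 : (∫ η in (0:ℝ)..τ, f (η + 1/2)) = ∫ η in (1/2:ℝ)..(τ + 1/2), f η := by
      simpa only [zero_add] using intervalIntegral.integral_comp_add_right (a := 0) (b := τ) (f := f) (1/2)
    rw [← h1]
    have hne : ∀ᵐ x : ℝ, x ∉ ({(1/2 : ℝ)} : Set ℝ) := by
      refine MeasureTheory.measure_eq_zero_iff_ae_notMem.mp ?_
      simp
    have hcong : (∫ η in (0:ℝ)..τ, f (η + 1/2)) = ∫ η in (0:ℝ)..τ, -f η := by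
      apply intervalIntegral.integral_congr_ae
      filter_upwards [hne] with x hx hmem
      rw [Set.uIoc_of_le hτ0] at hmem
      have hx12 : x ≠ (1/2 : ℝ) := by simpa using hx
      have hxlt : x < 1/2 := lt_of_le_of_ne (le_trans hmem.2 hτ1) hx12
      exact (h x ⟨hmem.1, hxlt⟩).symm
    rw [hcong, intervalIntegral.integral_neg]
  -- F is the primitive from 1/2
  set F : ℝ → ℝ := fun t => ∫ η in (1/2:ℝ)..t, f η with hF
  have hFcont : Continuous F := intervalIntegral.continuous_primitive hint (1/2)
  have hFint : ∀ a b : ℝ, IntervalIntegrable F MeasureTheory.volume a b :=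
    fun a b => hFcont.intervalIntegrable a b
  -- F(t) = ∫_0^t f - A
  have hsplit : ∀ t : ℝ, (∫ η in (0:ℝ)..t, f η) = A + F t := by
    intro t
    rw [hA, hF]
    exact (intervalIntegral.integral_add_adjacent_intervals (hint 0 (1/2)) (hint (1/2) t)).symm
  -- F(t + 1/2) = -A - F t for t ∈ [0,1/2]
  have hFshift : ∀ t : ℝ, 0 ≤ t → t ≤ 1/2 → F (t + 1/2) = -A - F t := by
    intro t h0 h1
    have := shift t h0 h1
    rw [hsplit t] at this
    simp only [hF]
    linarith [this]
  -- Compute C = ∫_0^1 F = -A/2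
  set C : ℝ := ∫ τ' in (0:ℝ)..1, F τ' with hC
  have hCsplit : C = (∫ t in (0:ℝ)..(1/2:ℝ), F t) + ∫ t in (1/2:ℝ)..1, F t :=
    (intervalIntegral.integral_add_adjacent_intervals (hFint 0 (1/2)) (hFint (1/2) 1)).symm
  have hsecond : (∫ t in (1/2:ℝ)..1, F t) = ∫ t in (0:ℝ)..(1/2:ℝ), F (t + 1/2) := by
    rw [intervalIntegral.integral_comp_add_right (a := 0) (b := 1/2) (f := F) (1/2)]
    norm_num
  have hsecond' : (∫ t in (0:ℝ)..(1/2:ℝ), F (t + 1/2))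
      = ∫ t in (0:ℝ)..(1/2:ℝ), (-A - F t) := by
    apply intervalIntegral.integral_congr
    intro x hx
    rw [Set.uIcc_of_le (by norm_num : (0:ℝ) ≤ 1/2)] at hx
    exact hFshift x hx.1 hx.2
  have hCval : C = -A / 2 := by
    have : (∫ t in (0:ℝ)..(1/2:ℝ), (-A - F t))
        = -A * (1/2) - ∫ t in (0:ℝ)..(1/2:ℝ), F t := by
      rw [intervalIntegral.integral_sub intervalIntegrable_const (hFint 0 (1/2))]
      simp [mul_comm]
    rw [hCsplit, hsecond, hsecond', this]
    ring
  -- Finish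
  intro τ hτ
  have h1 : F (τ + 1/2) = -∫ η in (0:ℝ)..τ, f η := shift τ hτ.1.le hτ.2.le
  have h2 : (∫ η in (0:ℝ)..τ, f η) = A + F τ := hsplit τ
  show -(F τ - C) = F (τ + 1/2) - C
  rw [h1, h2, hCval]
  ring

theorem stmt4 :
    ∀ i : ℕ, 1 ≤ i → ∀ τ ∈ Set.Ioo (0:ℝ) (1/2), -pwm i τ = pwm i (τ + 1/2) := by
  intro i hi
  induction i, hi using Nat.le_induction with
  | base =>
    intro τ hτ
    obtain ⟨h0, h1⟩ := hτ
    have ht1 : τ < 1/2 := h1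
    have ht2 : ¬ (τ + 1/2 < 1/2) := by linarith
    show -(if τ < 1/2 then Real.sqrt 3 * (4 * τ - 1) else Real.sqrt 3 * (-4 * τ + 3))
        = (if τ + 1/2 < 1/2 then Real.sqrt 3 * (4 * (τ + 1/2) - 1)
            else Real.sqrt 3 * (-4 * (τ + 1/2) + 3))
    rw [if_pos ht1, if_neg ht2]
    ring
  | succ n hn ih =>
    obtain ⟨m, rfl⟩ := Nat.exists_eq_add_of_le hn
    intro τ hτ
    have := key_step (pwm (1 + m)) (pwm_continuous (1 + m)) ih τ hτ
    have heq : 1 + m + 1 = m + 2 := by ring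
    rw [heq] at *
    show -((∫ η in (1/2:ℝ)..τ, pwm (m + 1) η)
        - ∫ τ' in (0:ℝ)..1, (∫ η in (1/2:ℝ)..τ', pwm (m + 1) η))
      = (∫ η in (1/2:ℝ)..(τ + 1/2), pwm (m + 1) η)
        - ∫ τ' in (0:ℝ)..1, (∫ η in (1/2:ℝ)..τ', pwm (m + 1) η)
    have hm : 1 + m = m + 1 := by ring
    rw [hm] at this
    exact this
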